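/- Let T ∈ L(H,K), S a closed subspace of H, A = T*T, and suppose (A,S) is compatible. Then for y ∈ H \ S, spl(T,S,y) = {(I − Q)y : Q ∈ P(A,S)}, and (I − P_{A,S})y is the unique vector of minimal norm in spl(T,S,y). -/

import Mathlib

open ContinuousLinearMap
open scoped InnerProductSpace

/-- `P(A,S)`: the set of `A`-Hermitian bounded projections with range `S`. -/
def PAS {H : Type*} [NormedAddCommGroup H] [InnerProductSpace ℂ H] [CompleteSpace H]
    (A : H →L[ℂ] H) (S : Submodule ℂ H) : Set (H →L[ℂ] H) :=
  {Q | Q ∘L Q = Q ∧ LinearMap.range (Q : H →ₗ[ℂ] H) = S ∧ A ∘L Q = adjoint Q ∘L A}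

section aux
set_option linter.unusedSectionVars false
variable {H K : Type*}
    [NormedAddCommGroup H] [InnerProductSpace ℂ H] [CompleteSpace H]
    [NormedAddCommGroup K] [InnerProductSpace ℂ K] [CompleteSpace K]

lemma aux_min_of_inner (T : H →L[ℂ] K) (S : Submodule ℂ H) {x y : H} {s₀ : H}
    (hs₀ : s₀ ∈ S) (hx : x = y + s₀)
    (horth : ∀ u ∈ S, ⟪T x, T u⟫_ℂ = 0) :
    ∀ s ∈ S, ‖T x‖ ≤ ‖T (y + s)‖ := by
  intro s hs
  have hu : s - s₀ ∈ S := S.sub_mem hs hs₀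
  have h1 : y + s = x + (s - s₀) := by rw [hx]; abel
  have h2 : ‖T (y + s)‖ ^ 2 = ‖T x‖ ^ 2 + ‖T (s - s₀)‖ ^ 2 := by
    rw [h1, map_add, @norm_add_sq ℂ, horth _ hu]
    simp
  nlinarith [norm_nonneg (T (y + s)), norm_nonneg (T x), sq_nonneg (‖T (s - s₀)‖)]

lemma aux_inner_of_min (T : H →L[ℂ] K) (S : Submodule ℂ H) {x y : H} {s₀ : H}
    (hs₀ : s₀ ∈ S) (hx : x = y + s₀)
    (hmin : ∀ s ∈ S, ‖T x‖ ≤ ‖T (y + s)‖) :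
    ∀ u ∈ S, ⟪T x, T u⟫_ℂ = 0 := by
  set K' : Submodule ℂ K := S.map (T : H →ₗ[ℂ] K) with hK'
  have hv : -(T s₀) ∈ K' := ⟨-s₀, S.neg_mem hs₀, by simp⟩
  have huv : T y - -(T s₀) = T x := by rw [hx]; simp
  have hbdd : BddBelow (Set.range fun w : K' => ‖T y - (w : K)‖) := by
    refine ⟨0, ?_⟩
    rintro b ⟨w, rfl⟩
    exact norm_nonneg _
  have hinf : ‖T y - -(T s₀)‖ = ⨅ w : K', ‖T y - (w : K)‖ := by
    apply le_antisymm
    · apply le_ciInf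
      rintro ⟨w, s', hs', rfl⟩
      rw [huv]
      refine le_trans (hmin (-s') (S.neg_mem hs')) (le_of_eq ?_)
      congr 1
      simp [sub_eq_add_neg]
    · exact ciInf_le hbdd ⟨_, hv⟩
  have := (Submodule.norm_eq_iInf_iff_inner_eq_zero K' hv).1 hinf
  intro u hu
  have h3 := this (T u) ⟨u, hu, rfl⟩
  rwa [huv] at h3

end aux

theorem stmt_13
    {H K : Type*}
    [NormedAddCommGroup H] [InnerProductSpace ℂ H] [CompleteSpace H]
    [NormedAddCommGroup K] [InnerProductSpace ℂ K] [CompleteSpace K]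
    (T : H →L[ℂ] K) (S : Submodule ℂ H) (hS : IsClosed (S : Set H))
    (A : H →L[ℂ] H) (hA : A = adjoint T ∘L T)
    (hcompat : (PAS A S).Nonempty)
    -- `P₀` is the distinguished element `P_{A,S}` of `P(A,S)`, whose nullspace is
    -- `A⁻¹(S^⊥) ⊖ (N(A) ∩ S)`.
    (P₀ : H →L[ℂ] H) (hP₀ : P₀ ∈ PAS A S)
    (hP₀ker : LinearMap.ker (P₀ : H →ₗ[ℂ] H) =
      Submodule.comap (A : H →ₗ[ℂ] H) Sᗮ ⊓ (LinearMap.ker (A : H →ₗ[ℂ] H) ⊓ S)ᗮ)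
    (y : H) (hy : y ∉ S) :
    {x : H | (∃ s ∈ S, x = y + s) ∧ ∀ s ∈ S, ‖T x‖ ≤ ‖T (y + s)‖} =
      {x : H | ∃ Q ∈ PAS A S, x = y - Q y} ∧
    (∀ x ∈ {x : H | (∃ s ∈ S, x = y + s) ∧ ∀ s ∈ S, ‖T x‖ ≤ ‖T (y + s)‖},
      ‖y - P₀ y‖ ≤ ‖x‖) ∧
    (∀ x ∈ {x : H | (∃ s ∈ S, x = y + s) ∧ ∀ s ∈ S, ‖T x‖ ≤ ‖T (y + s)‖},
      ‖x‖ = ‖y - P₀ y‖ → x = y - P₀ y) := by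
  haveI : CompleteSpace S := hS.completeSpace_coe
  -- basic facts about A
  have hAT : ∀ v w : H, ⟪A v, w⟫_ℂ = ⟪T v, T w⟫_ℂ := by
    intro v w
    rw [hA, comp_apply, adjoint_inner_left]
  have hsa : ∀ v w : H, ⟪A v, w⟫_ℂ = ⟪v, A w⟫_ℂ := by
    intro v w
    rw [hAT, ← adjoint_inner_right, ← comp_apply, ← hA]
  have hkerTA : ∀ z : H, T z = 0 → A z = 0 := by
    intro z hz
    rw [hA, comp_apply, hz, map_zero]
  have hkerAT : ∀ z : H, A z = 0 → T z = 0 := by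
    intro z hz
    have : ⟪T z, T z⟫_ℂ = 0 := by rw [← hAT, hz, inner_zero_left]
    exact inner_self_eq_zero.1 this
  -- facts about elements of PAS
  have hQmem : ∀ Q ∈ PAS A S, ∀ h : H, Q h ∈ S := by
    rintro Q ⟨_, hran, _⟩ h
    rw [← hran]
    exact LinearMap.mem_range_self _ h
  have hQfix : ∀ Q ∈ PAS A S, ∀ u ∈ S, Q u = u := by
    rintro Q ⟨hidem, hran, _⟩ u hu
    rw [← hran] at hu
    obtain ⟨v, rfl⟩ := hu
    calc Q ((Q : H →ₗ[ℂ] H) v) = (Q ∘L Q) v := rfl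
    _ = Q v := by rw [hidem]
    _ = (Q : H →ₗ[ℂ] H) v := rfl
  -- each y - Q y is in the spline set
  have hQspl : ∀ Q ∈ PAS A S,
      (∃ s ∈ S, y - Q y = y + s) ∧ ∀ s ∈ S, ‖T (y - Q y)‖ ≤ ‖T (y + s)‖ := by
    intro Q hQ
    have hmemS : (∃ s ∈ S, y - Q y = y + s) :=
      ⟨-(Q y), S.neg_mem (hQmem Q hQ y), by abel⟩
    obtain ⟨s₀, hs₀, hxeq⟩ := hmemS
    have horth : ∀ u ∈ S, ⟪T (y - Q y), T u⟫_ℂ = 0 := by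
      intro u hu
      have h1 : A (Q y) = adjoint Q (A y) := by
        rw [← comp_apply, hQ.2.2, comp_apply]
      rw [← hAT, map_sub, inner_sub_left, h1, adjoint_inner_left,
        hQfix Q hQ u hu, sub_self]
    exact ⟨⟨s₀, hs₀, hxeq⟩, aux_min_of_inner T S hs₀ hxeq horth⟩
  -- spline elements have orthogonality property
  have hsplorth : ∀ x : H,
      ((∃ s ∈ S, x = y + s) ∧ ∀ s ∈ S, ‖T x‖ ≤ ‖T (y + s)‖) →
      ∀ u ∈ S, ⟪T x, T u⟫_ℂ = 0 := by
    rintro x ⟨⟨s₀, hs₀, hxeq⟩, hmin⟩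
    exact aux_inner_of_min T S hs₀ hxeq hmin
  -- difference of two spline elements is in ker A ⊓ S
  have hdiff : ∀ x₁ x₂ : H,
      ((∃ s ∈ S, x₁ = y + s) ∧ ∀ s ∈ S, ‖T x₁‖ ≤ ‖T (y + s)‖) →
      ((∃ s ∈ S, x₂ = y + s) ∧ ∀ s ∈ S, ‖T x₂‖ ≤ ‖T (y + s)‖) →
      x₁ - x₂ ∈ LinearMap.ker (A : H →ₗ[ℂ] H) ⊓ S := by
    intro x₁ x₂ h₁ h₂
    obtain ⟨s₁, hs₁, he₁⟩ := h₁.1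
    obtain ⟨s₂, hs₂, he₂⟩ := h₂.1
    have hdS : x₁ - x₂ ∈ S := by
      rw [he₁, he₂]
      have : y + s₁ - (y + s₂) = s₁ - s₂ := by abel
      rw [this]
      exact S.sub_mem hs₁ hs₂
    have hT : T (x₁ - x₂) = 0 := by
      have : ⟪T (x₁ - x₂), T (x₁ - x₂)⟫_ℂ = 0 := by
        have e : T x₁ - T x₂ = T (x₁ - x₂) := (map_sub T x₁ x₂).symm
        rw [map_sub, inner_sub_left, e, hsplorth x₁ h₁ _ hdS,
          hsplorth x₂ h₂ _ hdS, sub_zero]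
      rw [map_sub] at this ⊢
      exact inner_self_eq_zero.1 this
    exact ⟨hkerTA _ hT, hdS⟩
  set x₀ : H := y - P₀ y with hx₀
  have hx₀spl := hQspl P₀ hP₀
  have hP₀idem : ∀ v : H, P₀ (P₀ v) = P₀ v := by
    intro v
    have := DFunLike.congr_fun hP₀.1 v
    rwa [comp_apply] at this
  -- x₀ is orthogonal to ker A ⊓ S
  have hx₀perp : ∀ m ∈ LinearMap.ker (A : H →ₗ[ℂ] H) ⊓ S, ⟪m, x₀⟫_ℂ = 0 := by
    intro m hm
    have hker : x₀ ∈ LinearMap.ker (P₀ : H →ₗ[ℂ] H) := by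
      rw [LinearMap.mem_ker]
      show P₀ (y - P₀ y) = 0
      rw [map_sub, hP₀idem, sub_self]
    rw [hP₀ker] at hker
    exact (Submodule.mem_orthogonal _ x₀).1 hker.2 m hm
  have hnormsq : ∀ x : H,
      ((∃ s ∈ S, x = y + s) ∧ ∀ s ∈ S, ‖T x‖ ≤ ‖T (y + s)‖) →
      ‖x‖ ^ 2 = ‖x₀‖ ^ 2 + ‖x - x₀‖ ^ 2 := by
    intro x hx
    have hm := hdiff x x₀ hx hx₀spl
    have hinner : ⟪x₀, x - x₀⟫_ℂ = 0 := by
      rw [← inner_conj_symm, hx₀perp _ hm, map_zero]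
    calc ‖x‖ ^ 2 = ‖x₀ + (x - x₀)‖ ^ 2 := by rw [show x₀ + (x - x₀) = x from by abel]
    _ = ‖x₀‖ ^ 2 + 2 * Complex.re ⟪x₀, x - x₀⟫_ℂ + ‖x - x₀‖ ^ 2 := @norm_add_sq ℂ _ _ _ _ _ _
    _ = ‖x₀‖ ^ 2 + ‖x - x₀‖ ^ 2 := by rw [hinner]; simp
  refine ⟨?_, ?_, ?_⟩
  · ext x
    simp only [Set.mem_setOf_eq]
    constructor
    · intro hx
      -- construct the projection Q
      set p : H := S.starProjection y with hp
      have hpS : p ∈ S := S.starProjection_apply_mem y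
      set w : H := y - p with hw
      have hwS : w ∈ Sᗮ := S.sub_starProjection_mem_orthogonal y
      have hw0 : w ≠ 0 := by
        intro h
        apply hy
        have : y = p := by rwa [sub_eq_zero] at h
        rw [this]; exact hpS
      have hwperp : ∀ u ∈ S, ⟪w, u⟫_ℂ = 0 := by
        intro u hu
        rw [← inner_conj_symm, (Submodule.mem_orthogonal _ _).1 hwS u hu, map_zero]
      set d : ℂ := ⟪w, y⟫_ℂ with hd
      have hdval : d = (‖w‖ : ℂ) ^ 2 := by
        rw [hd, show y = w + p from by rw [hw]; abel, inner_add_right,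
          hwperp p hpS, add_zero, inner_self_eq_norm_sq_to_K]
        norm_num
      have hd0 : d ≠ 0 := by
        rw [hdval]
        have : (‖w‖ : ℂ) ≠ 0 := by exact_mod_cast norm_ne_zero_iff.2 hw0
        exact pow_ne_zero 2 this
      set n : H := x₀ - x with hn
      have hnN : n ∈ LinearMap.ker (A : H →ₗ[ℂ] H) ⊓ S := hdiff x₀ x hx₀spl hx
      set Q : H →L[ℂ] H := P₀ + d⁻¹ • ((innerSL ℂ w).smulRight n) with hQdef
      have hQapp : ∀ h : H, Q h = P₀ h + (d⁻¹ * ⟪w, h⟫_ℂ) • n := by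
        intro h
        simp [hQdef, smul_smul]
      have hQPAS : Q ∈ PAS A S := by
        refine ⟨?_, ?_, ?_⟩
        · ext h
          have h1 : P₀ (Q h) = P₀ h + (d⁻¹ * ⟪w, h⟫_ℂ) • n := by
            rw [hQapp h, map_add, map_smul, hP₀idem, hQfix P₀ hP₀ n hnN.2]
          have h2 : ⟪w, Q h⟫_ℂ = 0 := by
            rw [hQapp h, inner_add_right, inner_smul_right,
              hwperp _ (hQmem P₀ hP₀ h), hwperp _ hnN.2]
            ring
          rw [comp_apply]
          rw [hQapp (Q h), h1, h2, mul_zero, zero_smul, add_zero, hQapp h]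
        · apply le_antisymm
          · intro z hz
            obtain ⟨h, rfl⟩ := LinearMap.mem_range.1 hz
            show Q h ∈ S
            rw [hQapp]
            exact S.add_mem (hQmem P₀ hP₀ h) (S.smul_mem _ hnN.2)
          · intro u hu
            refine LinearMap.mem_range.2 ⟨u, ?_⟩
            show Q u = u
            rw [hQapp, hQfix P₀ hP₀ u hu, hwperp u hu, mul_zero, zero_smul, add_zero]
        · ext h
          apply ext_inner_left ℂ
          intro v
          rw [comp_apply, comp_apply, adjoint_inner_right]
          have hAn : A n = 0 := hnN.1
          have hAQ : A (Q h) = A (P₀ h) := by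
            rw [hQapp, map_add, map_smul, hAn, smul_zero, add_zero]
          rw [hAQ, hQapp v, inner_add_left, inner_smul_left]
          have h5 : ⟪n, A h⟫_ℂ = 0 := by rw [← hsa, hAn, inner_zero_left]
          rw [h5, mul_zero, add_zero]
          have h6 : A (P₀ h) = adjoint P₀ (A h) := by
            rw [← comp_apply, hP₀.2.2, comp_apply]
          rw [h6, adjoint_inner_right]
      have hQy : Q y = y - x := by
        rw [hQapp, ← hd, inv_mul_cancel₀ hd0, one_smul, hn, hx₀]
        abel
      exact ⟨Q, hQPAS, by rw [hQy]; abel⟩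
    · rintro ⟨Q, hQ, rfl⟩
      exact hQspl Q hQ
  · intro x hx
    simp only [Set.mem_setOf_eq] at hx
    have h2 := hnormsq x hx
    nlinarith [norm_nonneg x, norm_nonneg x₀, sq_nonneg ‖x - x₀‖]
  · intro x hx hxeq
    simp only [Set.mem_setOf_eq] at hx
    have h2 := hnormsq x hx
    have h3 : ‖x - x₀‖ = 0 := by
      have h2' : ‖x - x₀‖ ^ 2 = 0 := by rw [hxeq] at h2; linarith
      exact pow_eq_zero_iff two_ne_zero |>.1 h2'
    have h4 : x - x₀ = 0 := norm_eq_zero.1 h3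
    rw [sub_eq_zero] at h4
    exact h4
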